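/- Assume A is a special extension of E (finite symmetric integral relation algebras), a and b are distinct diversity atoms of E, and u, v are diversity atoms of C_E(A) with u ≤ J(a,0) and v ≤ J(b,0). Then u;v = J(a;b, 0) in C_E(A). In particular, if a;b = 0' then u;v = 0'. -/
import Mathlib


universe u v

/-- Non-associative relation algebras: Boolean algebras with a binary
relative multiplication `comp`, unary converse `conv`, and identity `ide`. -/
class NA (α : Type u) extends BooleanAlgebra α where
  comp : α → α → α
  conv : α → α
  ide : α
  comp_ide : ∀ x : α, comp x ide = x
  ide_comp : ∀ x : α, comp ide x = x
  conv_conv : ∀ x : α, conv (conv x) = x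
  conv_sup : ∀ x y : α, conv (x ⊔ y) = conv x ⊔ conv y
  comp_sup : ∀ x y z : α, comp x (y ⊔ z) = comp x y ⊔ comp x z
  sup_comp : ∀ x y z : α, comp (x ⊔ y) z = comp x z ⊔ comp y z
  peirce1 : ∀ x y z : α, comp x y ⊓ z = ⊥ ↔ comp (conv x) z ⊓ y = ⊥
  peirce2 : ∀ x y z : α, comp x y ⊓ z = ⊥ ↔ comp z (conv y) ⊓ x = ⊥

/-- Relation algebras: associative non-associative relation algebras. -/
class RA (α : Type u) extends NA α where
  comp_assoc : ∀ x y z : α, comp (comp x y) z = comp x (comp y z)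

namespace NA

variable {α : Type u} [NA α]

/-- The diversity element 0'. -/
def div : α := (ide : α)ᶜ

/-- Converse is the identity. -/
def Symmetric (α : Type u) [NA α] : Prop := ∀ x : α, conv x = x

/-- The identity 1' is an atom. -/
def Integral (α : Type u) [NA α] : Prop := IsAtom (ide : α)

/-- A diversity atom: an atom below 0'. -/
def DivAtom (x : α) : Prop := IsAtom x ∧ x ≤ (div : α)

/-- A subalgebra of a (non-associative) relation algebra. -/
structure Subalgebra (α : Type u) [NA α] where
  carrier : Set α
  bot_mem : ⊥ ∈ carrier
  top_mem : ⊤ ∈ carrier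
  ide_mem : ide ∈ carrier
  compl_mem : ∀ x ∈ carrier, xᶜ ∈ carrier
  sup_mem : ∀ x ∈ carrier, ∀ y ∈ carrier, x ⊔ y ∈ carrier
  comp_mem : ∀ x ∈ carrier, ∀ y ∈ carrier, comp x y ∈ carrier
  conv_mem : ∀ x ∈ carrier, conv x ∈ carrier

/-- An atom of a subalgebra: a minimal nonzero element of the subalgebra. -/
def Subalgebra.AtomOf (E : Subalgebra α) (a : α) : Prop :=
  a ∈ E.carrier ∧ a ≠ ⊥ ∧ ∀ b ∈ E.carrier, b ≤ a → b = ⊥ ∨ b = a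

/-- A diversity atom of a subalgebra. -/
def Subalgebra.DivAtomOf (E : Subalgebra α) (a : α) : Prop :=
  E.AtomOf a ∧ a ≤ (div : α)

/-- `α` is (a copy of) the algebra E^{23}_q with atoms `e 0 = 1', e 1, …, e (q-1)`:
symmetric, integral, distinct diversity atoms multiply to 0', and
`e i ; e i = (e i)ᶜ` for diversity atoms. -/
def IsE23 (q : ℕ) (e : Fin q → α) : Prop :=
  Symmetric α ∧ Integral α ∧
  Function.Injective e ∧ (∀ i : Fin q, (i : ℕ) = 0 → e i = ide) ∧
  (∀ i, IsAtom (e i)) ∧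
  (∀ x : α, IsAtom x → ∃ i, x = e i) ∧
  (∀ i j : Fin q, (i : ℕ) ≠ 0 → (j : ℕ) ≠ 0 → i ≠ j →
    comp (e i) (e j) = (div : α)) ∧
  (∀ i : Fin q, (i : ℕ) ≠ 0 → comp (e i) (e i) = (e i)ᶜ)

/-- The subalgebra `Q` of `α` is a copy of E^{23}_q with atoms `e i`. -/
def IsE23Sub (Q : Subalgebra α) (q : ℕ) (e : Fin q → α) : Prop :=
  Function.Injective e ∧ (∀ i : Fin q, (i : ℕ) = 0 → e i = ide) ∧
  (∀ i, Q.AtomOf (e i)) ∧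
  (∀ x : α, Q.AtomOf x → ∃ i, x = e i) ∧
  (∀ i j : Fin q, (i : ℕ) ≠ 0 → (j : ℕ) ≠ 0 → i ≠ j →
    comp (e i) (e j) = (div : α)) ∧
  (∀ i : Fin q, (i : ℕ) ≠ 0 → comp (e i) (e i) = (e i)ᶜ)

/-- `cov` is a cover map for the subalgebra `E`: it sends each atom of the
ambient algebra to the atom of `E` containing it. -/
def CoverMap (E : Subalgebra α) (cov : α → α) : Prop :=
  ∀ x : α, IsAtom x → E.AtomOf (cov x) ∧ x ≤ cov x

/-- The ambient atomic algebra is obtained from the subalgebra `B` by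
splitting, with cover map `cov`. -/
def Splitting (B : Subalgebra α) (cov : α → α) : Prop :=
  CoverMap B cov ∧
  (∀ x y : α, DivAtom x → DivAtom y →
    (x = conv y → comp x y = comp (cov x) (cov y)) ∧
    (x ≠ conv y → comp x y = comp (cov x) (cov y) ⊓ (div : α)))

/-- The ambient algebra is a special extension of its subalgebra `E`. -/
def SpecialExt (E : Subalgebra α) : Prop :=
  (∀ a b c : α, E.DivAtomOf a → E.DivAtomOf b → E.DivAtomOf c →
    ¬(a = b ∧ b = c) → c ≤ comp a b →
    ∀ x y : α, IsAtom x → IsAtom y → x ≤ a → y ≤ b → c ≤ comp x y) ∧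
  (∀ a : α, E.DivAtomOf a → a ≤ comp a a →
    ∀ x y : α, IsAtom x → IsAtom y → x ≤ a → y ≤ a → comp x y ⊓ a ≠ ⊥)

/-- A flexible atom. -/
def Flexible (a : α) : Prop :=
  DivAtom a ∧ comp a a = ⊤ ∧
  ∀ x : α, DivAtom x → x ≠ a → comp x a = (div : α)

/-- A flexible atom of a subalgebra. -/
def FlexibleOf (E : Subalgebra α) (a : α) : Prop :=
  E.DivAtomOf a ∧ comp a a = ⊤ ∧
  ∀ x : α, E.DivAtomOf x → x ≠ a → comp x a = (div : α)

/-- A flexible trio of diversity atoms. -/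
def FlexTrio (a b c : α) : Prop :=
  DivAtom a ∧ DivAtom b ∧ DivAtom c ∧ a ≠ b ∧ a ≠ c ∧ b ≠ c ∧
  comp a a = ⊤ ∧ comp b b = ⊤ ∧ comp c c = ⊤ ∧
  comp a b = (div : α) ∧ comp a c = (div : α) ∧ comp b c = (div : α) ∧
  ∀ x : α, IsAtom x → x ∉ ({(ide : α), a, b, c} : Set α) →
    (comp x a = (div : α) ∧ comp x b = (div : α)) ∨
    (comp x a = (div : α) ∧ comp x c = (div : α)) ∨
    (comp x b = (div : α) ∧ comp x c = (div : α))

/-- A flexible trio of diversity atoms of a subalgebra. -/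
def FlexTrioOf (E : Subalgebra α) (a b c : α) : Prop :=
  E.DivAtomOf a ∧ E.DivAtomOf b ∧ E.DivAtomOf c ∧ a ≠ b ∧ a ≠ c ∧ b ≠ c ∧
  comp a a = ⊤ ∧ comp b b = ⊤ ∧ comp c c = ⊤ ∧
  comp a b = (div : α) ∧ comp a c = (div : α) ∧ comp b c = (div : α) ∧
  ∀ d : α, E.DivAtomOf d → d ∉ ({a, b, c} : Set α) →
    (comp d a = (div : α) ∧ comp d b = (div : α)) ∨
    (comp d a = (div : α) ∧ comp d c = (div : α)) ∨
    (comp d b = (div : α) ∧ comp d c = (div : α))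

/-- Basic k-by-k matrices of atoms. -/
def BasicMatrix (k : ℕ) (μ : Fin k → Fin k → α) : Prop :=
  (∀ i j, IsAtom (μ i j)) ∧ (∀ i, μ i i ≤ (ide : α)) ∧
  (∀ i j, conv (μ i j) = μ j i) ∧
  (∀ i j l, μ i j ≤ comp (μ i l) (μ l j))

/-- The identity condition for a basic matrix. -/
def IdCond (k : ℕ) (μ : Fin k → Fin k → α) : Prop :=
  ∀ i j, μ i j = (ide : α) ↔ i = j

/-- The 1-point extension property. -/
def OnePointExt (α : Type u) [NA α] : Prop :=
  ∀ (k : ℕ) (μ : Fin k → Fin k → α), BasicMatrix k μ → IdCond k μ →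
  ∀ x y : α, DivAtom x → DivAtom y → ∀ i j : Fin k, i ≠ j → μ i j ≤ comp x y →
  ∃ μ' : Fin (k + 1) → Fin (k + 1) → α, BasicMatrix (k + 1) μ' ∧ IdCond (k + 1) μ' ∧
    (∀ l m : Fin k, μ' l.castSucc m.castSucc = μ l m) ∧
    μ' i.castSucc (Fin.last k) = x ∧ μ' (Fin.last k) j.castSucc = y

/-- A representation of `α` over a base set `X`. -/
structure Representation (α : Type u) [NA α] (X : Type v) where
  toFun : α → Set (X × X)
  inj : Function.Injective toFun
  map_sup : ∀ a b : α, toFun (a ⊔ b) = toFun a ∪ toFun b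
  map_compl : ∀ a : α, toFun aᶜ = toFun ⊤ \ toFun a
  map_comp : ∀ a b : α,
    toFun (comp a b) = {p | ∃ z, (p.1, z) ∈ toFun a ∧ (z, p.2) ∈ toFun b}
  map_conv : ∀ a : α, toFun (conv a) = {p | (p.2, p.1) ∈ toFun a}
  map_ide : toFun ide = {p | p ∈ toFun ⊤ ∧ p.1 = p.2}

/-- A complete representation: preserves all existing joins. -/
def Representation.IsComplete {α : Type u} [NA α] {X : Type v}
    (r : Representation α X) : Prop :=
  ∀ (S : Set α) (s : α), IsLUB S s → r.toFun s = ⋃ a ∈ S, r.toFun a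

/-- Representability. -/
def Representable (α : Type u) [NA α] : Prop :=
  ∃ X : Type u, Nonempty (Representation α X)

/-- A representation of a subalgebra `E` over a base set `X`. -/
structure SubRepresentation (E : Subalgebra α) (X : Type v) where
  toFun : α → Set (X × X)
  inj : ∀ x ∈ E.carrier, ∀ y ∈ E.carrier, toFun x = toFun y → x = y
  map_sup : ∀ x ∈ E.carrier, ∀ y ∈ E.carrier, toFun (x ⊔ y) = toFun x ∪ toFun y
  map_compl : ∀ x ∈ E.carrier, toFun xᶜ = toFun ⊤ \ toFun x
  map_comp : ∀ x ∈ E.carrier, ∀ y ∈ E.carrier,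
    toFun (comp x y) = {p | ∃ z, (p.1, z) ∈ toFun x ∧ (z, p.2) ∈ toFun y}
  map_conv : ∀ x ∈ E.carrier, toFun (conv x) = {p | (p.2, p.1) ∈ toFun x}
  map_ide : toFun ide = {p | p ∈ toFun ⊤ ∧ p.1 = p.2}

/-- A homomorphism of (non-associative) relation algebras. -/
structure Hom (α : Type u) (β : Type v) [NA α] [NA β] where
  toFun : α → β
  map_sup : ∀ a b : α, toFun (a ⊔ b) = toFun a ⊔ toFun b
  map_compl : ∀ a : α, toFun aᶜ = (toFun a)ᶜ
  map_comp : ∀ a b : α, toFun (comp a b) = comp (toFun a) (toFun b)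
  map_conv : ∀ a : α, toFun (conv a) = conv (toFun a)
  map_ide : toFun ide = ide

/-- The thinning relation T(i,j,k) ⟺ (i ≤ j = k) ∨ (j ≤ k = i) ∨ (k ≤ i = j). -/
def T3 (i j k : ℕ) : Prop :=
  (i ≤ j ∧ j = k) ∨ (j ≤ k ∧ k = i) ∨ (k ≤ i ∧ i = j)

/-- The type of diversity atoms of `α`. -/
abbrev DAt (α : Type u) [NA α] : Type u := {x : α // DivAtom x}

/-- Atoms of the algebra C_E(A): the identity atom `none` together with
copies `some (x, i)` of each diversity atom `x` of `A`, for `i ∈ ω`. -/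
abbrev CAtom (α : Type u) [NA α] : Type u := Option (DAt α × ℕ)

/-- The cycle relation of the atom structure of C_E(A), relative to the cover
map `cov` of the subalgebra E. -/
def Cyc (cov : α → α) : CAtom α → CAtom α → CAtom α → Prop
  | none, none, none => True
  | none, some p, some q => p = q
  | some p, none, some q => p = q
  | some p, some q, none => p = q
  | some p, some q, some r =>
      r.1.1 ≤ comp p.1.1 q.1.1 ∧
      (cov p.1.1 = cov q.1.1 ∧ cov q.1.1 = cov r.1.1 → T3 p.2 q.2 r.2)
  | _, _, _ => False

/-- Relative multiplication in the complex algebra C_E(A). -/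
def Ccomp (cov : α → α) (X Y : Set (CAtom α)) : Set (CAtom α) :=
  {w | ∃ u ∈ X, ∃ v ∈ Y, Cyc cov u v w}

/-- The element J(a, n) of C_E(A). -/
def Jel (a : α) (n : ℕ) : Set (CAtom α) :=
  {w | (∃ p : DAt α × ℕ, w = some p ∧ p.1.1 ≤ a ∧ n ≤ p.2) ∨
       (w = none ∧ (ide : α) ≤ a)}

/-- The atom set B_n of the finite subalgebra of C_E(A). -/
def Bset (E : Subalgebra α) (n : ℕ) : Set (Set (CAtom α)) :=
  {s | s = ({none} : Set (CAtom α))} ∪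
  {s | ∃ (x : DAt α) (i : ℕ), i < n ∧ s = {some (x, i)}} ∪
  {s | ∃ a : α, E.DivAtomOf a ∧ s = Jel a n}

/-- Subalgebra of C_E(A) generated by a set `G` of elements. -/
inductive GenFrom (cov : α → α) (G : Set (Set (CAtom α))) : Set (CAtom α) → Prop
  | base {s : Set (CAtom α)} : s ∈ G → GenFrom cov G s
  | bot : GenFrom cov G ∅
  | idel : GenFrom cov G ({none} : Set (CAtom α))
  | compl {s : Set (CAtom α)} : GenFrom cov G s → GenFrom cov G sᶜ
  | sup {s t : Set (CAtom α)} : GenFrom cov G s → GenFrom cov G t →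
      GenFrom cov G (s ∪ t)
  | cmp {s t : Set (CAtom α)} : GenFrom cov G s → GenFrom cov G t →
      GenFrom cov G (Ccomp cov s t)

/-- Membership in the subalgebra B of C_E(A) generated by the atoms. -/
def Gen (cov : α → α) : Set (CAtom α) → Prop :=
  GenFrom cov {s | ∃ w : CAtom α, s = {w}}

end NA

section Helpers

variable {α : Type} [NA α]

lemma subalg_inf_mem (E : NA.Subalgebra α) {x y : α}
    (hx : x ∈ E.carrier) (hy : y ∈ E.carrier) : x ⊓ y ∈ E.carrier := by
  have h := E.compl_mem _ (E.sup_mem _ (E.compl_mem _ hx) _ (E.compl_mem _ hy))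
  simpa using h

lemma atomOf_disjoint (E : NA.Subalgebra α) {x y : α}
    (hx : E.AtomOf x) (hy : E.AtomOf y) (hxy : x ≠ y) : x ⊓ y = ⊥ := by
  rcases hx.2.2 _ (subalg_inf_mem E hx.1 hy.1) inf_le_left with h | h
  · exact h
  · exfalso
    have hle : x ≤ y := h ▸ inf_le_right
    rcases hy.2.2 _ hx.1 hle with h2 | h2
    · exact hx.2.1 h2
    · exact hxy h2

lemma cov_eq_of_le (E : NA.Subalgebra α) {cov : α → α} (hcov : NA.CoverMap E cov)
    {x a : α} (hx : IsAtom x) (ha : E.AtomOf a) (hle : x ≤ a) : cov x = a := by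
  obtain ⟨hca, hxc⟩ := hcov x hx
  by_contra hne
  have h := atomOf_disjoint E hca ha hne
  have h2 : x ≤ ⊥ := h ▸ le_inf hxc hle
  exact hx.1 (le_bot_iff.mp h2)

lemma comp_mono' {x x' y y' : α} (h1 : x ≤ x') (h2 : y ≤ y') :
    NA.comp x y ≤ NA.comp x' y' := by
  have e1 : NA.comp x' y = NA.comp x y ⊔ NA.comp x' y := by
    conv_lhs => rw [← sup_eq_right.mpr h1, NA.sup_comp]
  have e2 : NA.comp x' y' = NA.comp x' y ⊔ NA.comp x' y' := by
    conv_lhs => rw [← sup_eq_right.mpr h2, NA.comp_sup]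
  calc NA.comp x y ≤ NA.comp x y ⊔ NA.comp x' y := le_sup_left
    _ = NA.comp x' y := e1.symm
    _ ≤ NA.comp x' y ⊔ NA.comp x' y' := le_sup_left
    _ = NA.comp x' y' := e2.symm

end Helpers

/-- If A is a special extension of E, a ≠ b are diversity atoms of
E, and u, v are diversity atoms of C_E(A) with u ≤ J(a,0), v ≤ J(b,0), then
u;v = J(a;b,0); in particular if a;b = 0' then u;v = 0'. -/
theorem stmt7 {α : Type} [RA α] [Fintype α]
    (hsym : NA.Symmetric α) (hint : NA.Integral α)
    (E : NA.Subalgebra α) (cov : α → α) (hcov : NA.CoverMap E cov)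
    (hspec : NA.SpecialExt E)
    (a b : α) (ha : E.DivAtomOf a) (hb : E.DivAtomOf b) (hab : a ≠ b)
    (p q : NA.DAt α × ℕ)
    (hp : (some p : NA.CAtom α) ∈ NA.Jel a 0)
    (hq : (some q : NA.CAtom α) ∈ NA.Jel b 0) :
    NA.Ccomp cov {some p} {some q} = NA.Jel (NA.comp a b) 0 ∧
    (NA.comp a b = (NA.div : α) →
      NA.Ccomp cov {some p} {some q} = ({none} : Set (NA.CAtom α))ᶜ) := by
  have hpa : p.1.1 ≤ a := by
    rcases hp with ⟨p', hpe, hle, _⟩ | ⟨h, _⟩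
    · cases Option.some.inj hpe; exact hle
    · simp at h
  have hqb : q.1.1 ≤ b := by
    rcases hq with ⟨q', hqe, hle, _⟩ | ⟨h, _⟩
    · cases Option.some.inj hqe; exact hle
    · simp at h
  have hab0 : a ⊓ b = ⊥ := atomOf_disjoint E ha.1 hb.1 hab
  have hidecomp : NA.comp a b ⊓ NA.ide = ⊥ := by
    rw [NA.peirce1, hsym, NA.comp_ide]; exact hab0
  have hnide : ¬ (NA.ide : α) ≤ NA.comp a b := by
    intro h
    exact hint.1 (by rw [inf_eq_right.mpr h] at hidecomp; exact hidecomp)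
  have covp : cov p.1.1 = a := cov_eq_of_le E hcov p.1.2.1 ha.1 hpa
  have covq : cov q.1.1 = b := cov_eq_of_le E hcov q.1.2.1 hb.1 hqb
  have key : NA.Ccomp cov {some p} {some q} = NA.Jel (NA.comp a b) 0 := by
    ext w
    constructor
    · rintro ⟨u, hu, v, hv, hc⟩
      simp only [Set.mem_singleton_iff] at hu hv
      subst hu; subst hv
      cases w with
      | none =>
        exfalso
        have hpq : p = q := hc
        have hle : p.1.1 ≤ a ⊓ b := le_inf hpa (hpq ▸ hqb)
        rw [hab0, le_bot_iff] at hle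
        exact p.1.2.1.1 hle
      | some r =>
        exact Or.inl ⟨r, rfl, le_trans hc.1 (comp_mono' hpa hqb), Nat.zero_le _⟩
    · intro hw
      rcases hw with ⟨r, hwe, hler, -⟩ | ⟨hwe, hide⟩
      · subst hwe
        refine ⟨some p, rfl, some q, rfl, ?_, ?_⟩
        · -- r.1.1 ≤ comp p.1.1 q.1.1
          obtain ⟨hcr, hrc⟩ := hcov r.1.1 r.1.2.1
          -- cov r.1.1 ≤ comp a b
          have habmem : NA.comp a b ∈ E.carrier := E.comp_mem a ha.1.1 b hb.1.1
          have hmmem : cov r.1.1 ⊓ NA.comp a b ∈ E.carrier :=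
            subalg_inf_mem E hcr.1 habmem
          have hrle : r.1.1 ≤ cov r.1.1 ⊓ NA.comp a b := le_inf hrc hler
          have hcle : cov r.1.1 ≤ NA.comp a b := by
            rcases hcr.2.2 _ hmmem inf_le_left with h | h
            · exact absurd (le_bot_iff.mp (h ▸ hrle)) r.1.2.1.1
            · exact h ▸ inf_le_right
          -- cov r.1.1 is a diversity atom of E
          have hcdiv : cov r.1.1 ≤ (NA.div : α) := by
            have hii : cov r.1.1 ⊓ NA.ide = ⊥ := by
              rcases hint.le_iff.mp (inf_le_right :
                  cov r.1.1 ⊓ NA.ide ≤ NA.ide) with h | h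
              · exact h
              · exfalso
                have hile : (NA.ide : α) ≤ cov r.1.1 := h ▸ inf_le_left
                rcases hcr.2.2 _ E.ide_mem hile with h2 | h2
                · exact hint.1 h2
                · have : r.1.1 ≤ (NA.ide : α) ⊓ (NA.ide : α)ᶜ :=
                    le_inf (h2 ▸ hrc) r.1.2.2
                  rw [inf_compl_eq_bot, le_bot_iff] at this
                  exact r.1.2.1.1 this
            exact (disjoint_iff.mpr hii).le_compl_right
          have hc := hspec.1 a b (cov r.1.1) ha hb ⟨hcr, hcdiv⟩
            (fun h => hab h.1) hcle p.1.1 q.1.1 p.1.2.1 q.1.2.1 hpa hqb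
          exact le_trans hrc hc
        · rintro ⟨h1, -⟩
          rw [covp, covq] at h1
          exact absurd h1 hab
      · exact absurd hide hnide
  refine ⟨key, fun hdiv => ?_⟩
  rw [key, hdiv]
  ext w
  cases w with
  | none =>
    simp only [NA.Jel, NA.div, Set.mem_setOf_eq, Set.mem_compl_iff,
      Set.mem_singleton_iff]
    constructor
    · rintro (⟨r, h, -⟩ | ⟨-, h⟩)
      · exact absurd h (by simp)
      · exfalso
        have : (NA.ide : α) ≤ (NA.ide : α) ⊓ (NA.ide : α)ᶜ := le_inf le_rfl h
        rw [inf_compl_eq_bot, le_bot_iff] at this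
        exact hint.1 this
    · intro h; exact absurd trivial h
  | some r =>
    simp only [NA.Jel, Set.mem_setOf_eq, Set.mem_compl_iff, Set.mem_singleton_iff]
    constructor
    · intro _; simp
    · intro _; exact Or.inl ⟨r, rfl, r.1.2.2, Nat.zero_le _⟩
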